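/- Assume the maximal operator \sigma^{\#} f = \sup_k |\sigma_{M_k} f| is bounded from H_p to L_p for all p > 0, and \sigma^* f = \sup_n |\sigma_n f| is bounded from H_p to L_p for p > 1/2. Then for 1/2 < p \leq 1, \|\sigma_n f\|_{H_p} \leq c_p \|f\|_{H_p} for all n, where \|g\|_{H_p} = \|\sup_k S_{M_k} g\|_p. -/

import Mathlib

open MeasureTheory Complex Filter
open scoped Classical
open scoped ENNReal NNReal

noncomputable section

def vM (m : ℕ → ℕ) : ℕ → ℕ
  | 0 => 1
  | n + 1 => m n * vM m n

abbrev VG (m : ℕ → ℕ) := ∀ k : ℕ, Fin (m k)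

def vdigit (m : ℕ → ℕ) (n j : ℕ) : ℕ := (n / vM m j) % m j

def vpsi (m : ℕ → ℕ) (n : ℕ) (x : VG m) : ℂ :=
  ∏ k ∈ Finset.range (n + 1),
    Complex.exp (2 * Real.pi * Complex.I * (vdigit m n k) * ((x k : ℕ) : ℂ) / (m k))

def vD (m : ℕ → ℕ) (n : ℕ) (x : VG m) : ℂ := ∑ k ∈ Finset.range n, vpsi m k x

variable {m : ℕ → ℕ}

def vCoeff (μ : Measure (VG m)) (f : VG m → ℂ) (i : ℕ) : ℂ :=
  ∫ x, f x * (starRingEnd ℂ) (vpsi m i x) ∂μ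

def vS (μ : Measure (VG m)) (f : VG m → ℂ) (n : ℕ) (x : VG m) : ℂ :=
  ∑ k ∈ Finset.range n, vCoeff μ f k * vpsi m k x

def vSigma (μ : Measure (VG m)) (f : VG m → ℂ) (n : ℕ) (x : VG m) : ℂ :=
  (n : ℂ)⁻¹ * ∑ k ∈ Finset.Icc 1 n, vS μ f k x

def vCyl (m : ℕ → ℕ) (n : ℕ) (x : VG m) : Set (VG m) := {y | ∀ i < n, y i = x i}

def vI (m : ℕ → ℕ) (n : ℕ) : Set (VG m) := {y | ∀ i < n, (y i : ℕ) = 0}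

def isVHaar (μ : Measure (VG m)) : Prop :=
  ∀ n (x : VG m), μ (vCyl m n x) = ((vM m n : ℝ≥0∞))⁻¹

def vHp (μ : Measure (VG m)) (p : ℝ) (f : VG m → ℂ) : ℝ≥0∞ :=
  (∫⁻ x, (⨆ k, ENNReal.ofReal (‖vS μ f (vM m k) x‖)) ^ p ∂μ) ^ (1 / p)

def vLpE (μ : Measure (VG m)) (p : ℝ) (g : VG m → ℝ≥0∞) : ℝ≥0∞ :=
  (∫⁻ x, (g x) ^ p ∂μ) ^ (1 / p)

lemma vM_pos (hm : ∀ k, 2 ≤ m k) : ∀ k, 0 < vM m k := by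
  intro k; induction k with
  | zero => simp [vM]
  | succ n ih => exact Nat.mul_pos (by linarith [hm n]) ih

lemma lt_vM (hm : ∀ k, 2 ≤ m k) : ∀ k, k < vM m k := by
  intro k; induction k with
  | zero => simp [vM]
  | succ n ih =>
    have h2 : 2 * vM m n ≤ vM m (n + 1) :=
      Nat.mul_le_mul_right _ (hm n)
    have := vM_pos hm n
    simp only [vM] at *
    omega

lemma vM_dvd (h : i ≤ j) : vM m i ∣ vM m j := by
  induction j with
  | zero => simpa using (Nat.le_zero.mp h) ▸ dvd_refl _
  | succ n ih =>
    rcases Nat.lt_or_ge i (n+1) with h'|h'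
    · exact dvd_mul_of_dvd_right (ih (by omega)) _
    · have : i = n + 1 := by omega
      subst this; rfl

lemma vdigit_lt (hm : ∀ k, 2 ≤ m k) (n k : ℕ) : vdigit m n k < m k :=
  Nat.mod_lt _ (by linarith [hm k])

lemma vdigit_eq_zero_of_lt (h : n < vM m j) : vdigit m n j = 0 := by
  simp [vdigit, Nat.div_eq_of_lt h]

lemma vM_prod : vM m N = ∏ k ∈ Finset.range N, m k := by
  induction N with
  | zero => rfl
  | succ n ih => rw [Finset.prod_range_succ, ← ih]; simp [vM, mul_comm]

/-- digits below N determine a number < vM m N -/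
lemma digits_inj (hm : ∀ k, 2 ≤ m k) :
    ∀ N, ∀ i j, i < vM m N → j < vM m N →
    (∀ k < N, vdigit m i k = vdigit m j k) → i = j := by
  intro N
  induction N with
  | zero => intro i j hi hj _; simp [vM] at hi hj; omega
  | succ n ih =>
    intro i j hi hj hd
    have hmn := vM_pos hm n
    have h1 : i % vM m n = j % vM m n := by
      have := ih (i % vM m n) (j % vM m n) (Nat.mod_lt _ hmn) (Nat.mod_lt _ hmn) ?_
      · exact this
      · intro k hk
        have hdvd : vM m (k+1) ∣ vM m n := vM_dvd (by omega)
        obtain ⟨t, ht⟩ := hdvd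
        have hM : vM m n = vM m k * (m k * t) := by
          rw [ht]; simp [vM]; ring
        have e : ∀ a : ℕ, vdigit m (a % vM m n) k = vdigit m a k := by
          intro a
          unfold vdigit
          rw [hM, Nat.mod_mul_right_div_self, Nat.mod_mod_of_dvd _ ⟨t, rfl⟩]
        rw [e, e]; exact hd k (by omega)
    have h2 : i / vM m n = j / vM m n := by
      have d1 := hd n (by omega)
      unfold vdigit at d1
      rwa [Nat.mod_eq_of_lt, Nat.mod_eq_of_lt] at d1
      · exact Nat.div_lt_of_lt_mul (by simpa [vM, mul_comm] using hj)
      · exact Nat.div_lt_of_lt_mul (by simpa [vM, mul_comm] using hi)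
    have e1 := Nat.div_add_mod i (vM m n)
    have e2 := Nat.div_add_mod j (vM m n)
    have e3 : vM m n * (i / vM m n) = vM m n * (j / vM m n) := by rw [h2]
    omega

lemma vpsi_ext (hm : ∀ k, 2 ≤ m k) {n N : ℕ} (h : n + 1 ≤ N) (x : VG m) :
    vpsi m n x = ∏ k ∈ Finset.range N,
      Complex.exp (2 * Real.pi * Complex.I * (vdigit m n k) * ((x k : ℕ) : ℂ) / (m k)) := by
  unfold vpsi
  refine Finset.prod_subset (Finset.range_subset_range.mpr h) ?_
  intro k hk hk'
  simp only [Finset.mem_range] at hk hk'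
  have hd : vdigit m n k = 0 := vdigit_eq_zero_of_lt (lt_of_lt_of_le (by omega : n < k) (le_of_lt (lt_vM hm k)))
  simp [hd]

lemma sum_char (q d d' : ℕ) (hq : 0 < q) (hd : d < q) (hd' : d' < q) :
    ∑ a ∈ Finset.range q, Complex.exp (2 * Real.pi * Complex.I * d * a / q) *
      (starRingEnd ℂ) (Complex.exp (2 * Real.pi * Complex.I * d' * a / q)) =
    if d = d' then (q : ℂ) else 0 := by
  have hq0 : (q : ℂ) ≠ 0 := Nat.cast_ne_zero.mpr hq.ne'
  set t : ℤ := (d : ℤ) - d' with ht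
  set z : ℂ := Complex.exp (2 * Real.pi * Complex.I * t / q) with hz
  have hterm : ∀ a ∈ Finset.range q,
      Complex.exp (2 * Real.pi * Complex.I * d * a / q) *
        (starRingEnd ℂ) (Complex.exp (2 * Real.pi * Complex.I * d' * a / q)) = z ^ a := by
    intro a _
    rw [← Complex.exp_conj]
    rw [← Complex.exp_add, hz, ← Complex.exp_nat_mul]
    congr 1
    have : (starRingEnd ℂ) (2 * Real.pi * Complex.I * d' * a / q)
        = -(2 * Real.pi * Complex.I * d' * a / q) := by
      simp [map_div₀, Complex.conj_I, map_ofNat]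
      ring
    rw [this, ht]
    push_cast
    field_simp
    ring
  rw [Finset.sum_congr rfl hterm]
  by_cases hdd : d = d'
  · subst hdd
    have : z = 1 := by rw [hz, ht]; simp
    simp [this]
  · have htne : t ≠ 0 := by omega
    have hz1 : z ≠ 1 := by
      intro h1
      rw [hz, Complex.exp_eq_one_iff] at h1
      obtain ⟨k, hk⟩ := h1
      have hpi : (2 : ℂ) * Real.pi * Complex.I ≠ 0 := by
        simp [Real.pi_ne_zero, Complex.I_ne_zero]
      field_simp at hk
      have hc : (t : ℂ) = (k : ℂ) * q := by
        apply mul_left_cancel₀ hpi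
        linear_combination (2 * Real.pi * Complex.I) * hk
      have hcz : t = k * q := by exact_mod_cast hc
      have hdvd : (q : ℤ) ∣ t := ⟨k, by linarith⟩
      have hdvd' : q ∣ t.natAbs := Int.natCast_dvd_natCast.mp (Int.dvd_natAbs.mpr hdvd)
      have habs : t.natAbs < q := by omega
      have : t.natAbs = 0 := by
        by_contra hne
        exact absurd (Nat.le_of_dvd (Nat.pos_of_ne_zero hne) hdvd') (by omega)
      omega
    rw [geom_sum_eq hz1]
    have hzq : z ^ q = 1 := by
      rw [hz, ← Complex.exp_nat_mul]
      have : (q : ℂ) * (2 * Real.pi * Complex.I * t / q) = t * (2 * Real.pi * Complex.I) := by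
        field_simp
      rw [this, Complex.exp_int_mul_two_pi_mul_I]
    rw [hzq]
    simp [hdd]

lemma integral_fin_dep {μ : Measure (VG m)} [IsProbabilityMeasure μ] (hμ : isVHaar μ)
    (hm : ∀ k, 2 ≤ m k) (N : ℕ) (g : (∀ k : Fin N, Fin (m k)) → ℂ) :
    ∫ x, g (fun k => x k) ∂μ = (vM m N : ℂ)⁻¹ * ∑ c : (∀ k : Fin N, Fin (m k)), g c := by
  classical
  set A : (∀ k : Fin N, Fin (m k)) → Set (VG m) :=
    fun c => {y : VG m | ∀ k : Fin N, y (k : ℕ) = c k} with hA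
  have hmeas : ∀ c, MeasurableSet (A c) := by
    intro c
    have : A c = ⋂ k : Fin N, (fun y : VG m => y (k : ℕ)) ⁻¹' {c k} := by
      ext y; simp [hA, Set.mem_iInter]
    rw [this]
    exact MeasurableSet.iInter fun k => (measurable_pi_apply _) (measurableSet_singleton _)
  have hμA : ∀ c, μ (A c) = ((vM m N : ℝ≥0∞))⁻¹ := by
    intro c
    set x0 : VG m := fun i => if h : i < N then c ⟨i, h⟩ else ⟨0, by have := hm i; omega⟩ with hx0
    have : A c = vCyl m N x0 := by
      ext y
      constructor
      · intro hy i hi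
        have := hy ⟨i, hi⟩
        simp [hx0, hi, this]
      · intro hy k
        have := hy (k : ℕ) k.2
        simpa [hx0, k.2] using this
    rw [this, hμ]
  have hpt : ∀ x : VG m, g (fun k => x k) = ∑ c, (A c).indicator (fun _ => g c) x := by
    intro x
    rw [Fintype.sum_eq_single (fun k : Fin N => x (k : ℕ))]
    · simp [Set.indicator_of_mem, hA, Set.mem_setOf_eq]
    · intro c hc
      apply Set.indicator_of_notMem
      intro hx
      exact hc (funext fun k => ((hx k).symm))
  have : (fun x : VG m => g (fun k => x (k : ℕ))) =
      fun x => ∑ c, (A c).indicator (fun _ => g c) x := funext hpt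
  rw [this, integral_finset_sum _ (fun c _ => (integrable_const (g c)).indicator (hmeas c))]
  have hint : ∀ c : (∀ k : Fin N, Fin (m k)),
      ∫ x, (A c).indicator (fun _ => g c) x ∂μ = ((vM m N : ℝ))⁻¹ • g c := by
    intro c
    rw [integral_indicator_const _ (hmeas c), measureReal_def, hμA c]
    congr 1
    rw [ENNReal.toReal_inv]
    simp
  simp_rw [hint]
  rw [← Finset.smul_sum]
  rw [Complex.real_smul]
  push_cast
  ring



lemma vpsi_orthogonal {μ : Measure (VG m)} [IsProbabilityMeasure μ] (hμ : isVHaar μ)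
    (hm : ∀ k, 2 ≤ m k) (i j : ℕ) :
    ∫ x, vpsi m j x * (starRingEnd ℂ) (vpsi m i x) ∂μ = if i = j then 1 else 0 := by
  classical
  set N := max i j + 1 with hN
  have hiN : i + 1 ≤ N := by omega
  have hjN : j + 1 ≤ N := by omega
  set e : ℕ → ℕ → ℂ := fun k a =>
    Complex.exp (2 * Real.pi * Complex.I * (vdigit m j k) * (a : ℂ) / (m k)) *
      (starRingEnd ℂ) (Complex.exp (2 * Real.pi * Complex.I * (vdigit m i k) * (a : ℂ) / (m k)))
    with he
  have hpt : ∀ x : VG m, vpsi m j x * (starRingEnd ℂ) (vpsi m i x)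
      = ∏ k ∈ Finset.range N, e k ((x k : ℕ)) := by
    intro x
    rw [vpsi_ext hm hjN x, vpsi_ext hm hiN x, map_prod, ← Finset.prod_mul_distrib]
  have hfun : (fun x : VG m => vpsi m j x * (starRingEnd ℂ) (vpsi m i x))
      = fun x : VG m => (fun c : (∀ k : Fin N, Fin (m k)) =>
          ∏ k : Fin N, e (k : ℕ) ((c k : ℕ))) (fun k : Fin N => x (k : ℕ)) := by
    funext x
    rw [hpt x]
    exact (Fin.prod_univ_eq_prod_range (fun k => e k ((x (k : ℕ) : ℕ))) N).symm
  have key := integral_fin_dep hμ hm N (fun c : (∀ k : Fin N, Fin (m k)) =>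
    ∏ k : Fin N, e (k : ℕ) ((c k : ℕ)))
  rw [hfun, key]
  have hsum : (∑ c : (∀ k : Fin N, Fin (m k)), ∏ k : Fin N, e (k : ℕ) ((c k : ℕ)))
      = ∏ k : Fin N, ∑ a : Fin (m (k : ℕ)), e (k : ℕ) ((a : ℕ)) := by
    rw [← Fintype.piFinset_univ]
    exact (Finset.prod_univ_sum (fun k : Fin N => (Finset.univ : Finset (Fin (m (k : ℕ)))))
      (fun (k : Fin N) (a : Fin (m (k : ℕ))) => e (k : ℕ) ((a : ℕ)))).symm
  rw [hsum]
  have hcoord : ∀ k : Fin N, (∑ a : Fin (m (k : ℕ)), e (k : ℕ) ((a : ℕ)))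
      = if vdigit m j (k : ℕ) = vdigit m i (k : ℕ) then ((m (k : ℕ)) : ℂ) else 0 := by
    intro k
    have hq : 0 < m (k : ℕ) := by have := hm (k : ℕ); omega
    rw [Fin.sum_univ_eq_sum_range (fun a => e (k : ℕ) a) (m (k : ℕ))]
    exact sum_char (m (k : ℕ)) _ _ hq (vdigit_lt hm j _) (vdigit_lt hm i _)
  rw [Finset.prod_congr rfl (fun k _ => hcoord k)]
  by_cases hij : i = j
  · subst hij
    rw [if_pos rfl]
    have h2 : (∏ k : Fin N, if vdigit m i (k : ℕ) = vdigit m i (k : ℕ)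
        then ((m (k : ℕ)) : ℂ) else 0) = ((vM m N : ℕ) : ℂ) := by
      rw [Finset.prod_congr rfl (fun k _ => if_pos rfl)]
      rw [Fin.prod_univ_eq_prod_range (fun k => ((m k : ℂ))) N, vM_prod]
      push_cast
      rfl
    rw [h2, inv_mul_cancel₀ (by exact_mod_cast (vM_pos hm N).ne')]
  · rw [if_neg hij]
    have hiM : i < vM m N := lt_trans (by omega) (lt_vM hm N)
    have hjM : j < vM m N := lt_trans (by omega) (lt_vM hm N)
    have hex : ¬ ∀ k < N, vdigit m i k = vdigit m j k := fun h =>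
      hij (digits_inj hm N i j hiM hjM h)
    push_neg at hex
    obtain ⟨k0, hk0N, hkd⟩ := hex
    have : (∏ k : Fin N, if vdigit m j (k : ℕ) = vdigit m i (k : ℕ) then ((m (k : ℕ)) : ℂ) else 0)
        = 0 := by
      apply Finset.prod_eq_zero (Finset.mem_univ (⟨k0, hk0N⟩ : Fin N))
      exact if_neg (fun h => hkd (Eq.symm h))
    rw [this, mul_zero]



lemma vpsi_measurable (n : ℕ) : Measurable (vpsi m n) := by
  unfold vpsi
  apply Finset.measurable_prod
  intro k _
  exact (Measurable.of_discrete (f := fun a : Fin (m k) => Complex.exp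
    (2 * Real.pi * Complex.I * (vdigit m n k) * ((a : ℕ) : ℂ) / (m k)))).comp
    (measurable_pi_apply k)

lemma vS_measurable (μ : Measure (VG m)) (f : VG m → ℂ) (n : ℕ) : Measurable (vS μ f n) := by
  unfold vS
  exact Finset.measurable_sum _ (fun k _ => (vpsi_measurable k).const_mul _)

lemma vSigma_measurable (μ : Measure (VG m)) (f : VG m → ℂ) (n : ℕ) :
    Measurable (vSigma μ f n) := by
  unfold vSigma
  exact (Finset.measurable_sum _ (fun k _ => vS_measurable μ f k)).const_mul _

lemma integrable_fin_dep {μ : Measure (VG m)} [IsProbabilityMeasure μ]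
    (N : ℕ) (g : (∀ k : Fin N, Fin (m k)) → ℂ) :
    Integrable (fun x : VG m => g (fun k : Fin N => x (k : ℕ))) μ := by
  classical
  set A : (∀ k : Fin N, Fin (m k)) → Set (VG m) :=
    fun c => {y : VG m | ∀ k : Fin N, y (k : ℕ) = c k} with hA
  have hmeas : ∀ c, MeasurableSet (A c) := by
    intro c
    have : A c = ⋂ k : Fin N, (fun y : VG m => y (k : ℕ)) ⁻¹' {c k} := by
      ext y; simp [hA, Set.mem_iInter]
    rw [this]
    exact MeasurableSet.iInter fun k => (measurable_pi_apply _) (measurableSet_singleton _)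
  have hpt : ∀ x : VG m, g (fun k => x k) = ∑ c, (A c).indicator (fun _ => g c) x := by
    intro x
    rw [Fintype.sum_eq_single (fun k : Fin N => x (k : ℕ))]
    · simp [Set.indicator_of_mem, hA, Set.mem_setOf_eq]
    · intro c hc
      apply Set.indicator_of_notMem
      intro hx
      exact hc (funext fun k => ((hx k).symm))
  have : (fun x : VG m => g (fun k => x (k : ℕ))) =
      fun x => ∑ c, (A c).indicator (fun _ => g c) x := funext hpt
  rw [this]
  exact integrable_finset_sum _ (fun c _ => (integrable_const (g c)).indicator (hmeas c))

lemma integrable_vpsi_mul_conj {μ : Measure (VG m)} [IsProbabilityMeasure μ]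
    (hm : ∀ k, 2 ≤ m k) (i j : ℕ) :
    Integrable (fun x => vpsi m j x * (starRingEnd ℂ) (vpsi m i x)) μ := by
  classical
  set N := max i j + 1 with hN
  have hiN : i + 1 ≤ N := by omega
  have hjN : j + 1 ≤ N := by omega
  set e : ℕ → ℕ → ℂ := fun k a =>
    Complex.exp (2 * Real.pi * Complex.I * (vdigit m j k) * (a : ℂ) / (m k)) *
      (starRingEnd ℂ) (Complex.exp (2 * Real.pi * Complex.I * (vdigit m i k) * (a : ℂ) / (m k)))
    with he
  have hfun : (fun x : VG m => vpsi m j x * (starRingEnd ℂ) (vpsi m i x))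
      = fun x : VG m => (fun c : (∀ k : Fin N, Fin (m k)) =>
          ∏ k : Fin N, e (k : ℕ) ((c k : ℕ))) (fun k : Fin N => x (k : ℕ)) := by
    funext x
    rw [vpsi_ext hm hjN x, vpsi_ext hm hiN x, map_prod, ← Finset.prod_mul_distrib]
    exact (Fin.prod_univ_eq_prod_range (fun k => e k ((x (k : ℕ) : ℕ))) N).symm
  have := integrable_fin_dep (μ := μ) N (fun c : (∀ k : Fin N, Fin (m k)) =>
    ∏ k : Fin N, e (k : ℕ) ((c k : ℕ)))
  rw [hfun]
  exact this

lemma sum_Icc_range (n : ℕ) (g : ℕ → ℂ) :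
    ∑ k ∈ Finset.Icc 1 n, ∑ j ∈ Finset.range k, g j
      = ∑ j ∈ Finset.range n, ((n - j : ℕ) : ℂ) * g j := by
  induction n with
  | zero => simp
  | succ n ih =>
    have hins : Finset.Icc 1 (n + 1) = insert (n + 1) (Finset.Icc 1 n) := by
      exact (Finset.insert_Icc_right_eq_Icc_add_one (by omega)).symm
    rw [hins, Finset.sum_insert (by simp), ih, Finset.sum_range_succ ((fun j => ((n + 1 - j : ℕ) : ℂ) * g j))]
    rw [Finset.sum_range_succ g]
    have : ∑ j ∈ Finset.range n, ((n + 1 - j : ℕ) : ℂ) * g j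
        = ∑ j ∈ Finset.range n, (((n - j : ℕ) : ℂ) * g j + g j) := by
      apply Finset.sum_congr rfl
      intro j hj
      simp only [Finset.mem_range] at hj
      have h1 : (n + 1 - j : ℕ) = (n - j) + 1 := by omega
      rw [h1]
      push_cast
      ring
    rw [this, Finset.sum_add_distrib]
    simp
    ring

lemma vSigma_eq {μ : Measure (VG m)} (f : VG m → ℂ) (n : ℕ) (x : VG m) :
    vSigma μ f n x = (n : ℂ)⁻¹ * ∑ j ∈ Finset.range n,
      ((n - j : ℕ) : ℂ) * (vCoeff μ f j * vpsi m j x) := by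
  unfold vSigma vS
  rw [sum_Icc_range n (fun j => vCoeff μ f j * vpsi m j x)]

lemma vCoeff_vSigma {μ : Measure (VG m)} [IsProbabilityMeasure μ] (hμ : isVHaar μ)
    (hm : ∀ k, 2 ≤ m k) (f : VG m → ℂ) (n i : ℕ) :
    vCoeff μ (vSigma μ f n) i
      = if i < n then (n : ℂ)⁻¹ * ((n - i : ℕ) : ℂ) * vCoeff μ f i else 0 := by
  classical
  unfold vCoeff
  have hfun : (fun x => vSigma μ f n x * (starRingEnd ℂ) (vpsi m i x))
      = fun x => ∑ j ∈ Finset.range n, ((n : ℂ)⁻¹ * ((n - j : ℕ) : ℂ) * vCoeff μ f j) *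
          (vpsi m j x * (starRingEnd ℂ) (vpsi m i x)) := by
    funext x
    rw [vSigma_eq f n x, Finset.mul_sum, Finset.sum_mul]
    apply Finset.sum_congr rfl
    intro j _
    ring
  rw [hfun, integral_finset_sum _
    (fun j _ => (integrable_vpsi_mul_conj hm i j).const_mul _)]
  have : ∀ j ∈ Finset.range n,
      ∫ x, ((n : ℂ)⁻¹ * ((n - j : ℕ) : ℂ) * vCoeff μ f j) *
          (vpsi m j x * (starRingEnd ℂ) (vpsi m i x)) ∂μ
      = if i = j then (n : ℂ)⁻¹ * ((n - j : ℕ) : ℂ) * vCoeff μ f j else 0 := by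
    intro j _
    rw [integral_const_mul, vpsi_orthogonal hμ hm i j]
    by_cases h : i = j <;> simp [h]
  rw [Finset.sum_congr rfl this, Finset.sum_ite_eq]
  simp only [Finset.mem_range]
  rfl

lemma vS_vSigma {μ : Measure (VG m)} [IsProbabilityMeasure μ] (hμ : isVHaar μ)
    (hm : ∀ k, 2 ≤ m k) (f : VG m → ℂ) (n N : ℕ) (x : VG m) :
    vS μ (vSigma μ f n) N x = ∑ i ∈ Finset.range (min N n),
      ((n : ℂ)⁻¹ * ((n - i : ℕ) : ℂ)) * (vCoeff μ f i * vpsi m i x) := by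
  classical
  unfold vS
  have h1 : ∀ i ∈ Finset.range N, vCoeff μ (vSigma μ f n) i * vpsi m i x
      = (if i < n then (n : ℂ)⁻¹ * ((n - i : ℕ) : ℂ) * vCoeff μ f i else 0) * vpsi m i x := by
    intro i _
    rw [vCoeff_vSigma hμ hm f n i]
  rw [Finset.sum_congr rfl h1]
  rw [← Finset.sum_subset (Finset.range_subset_range.mpr (min_le_left N n) :
      Finset.range (min N n) ⊆ Finset.range N)]
  · apply Finset.sum_congr rfl
    intro i hi
    simp only [Finset.mem_range, lt_min_iff] at hi
    rw [if_pos hi.2]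
    ring
  · intro i hiN hi
    simp only [Finset.mem_range, lt_min_iff, not_and, not_lt] at hiN hi
    rw [if_neg (by omega), zero_mul]

lemma key_ge {μ : Measure (VG m)} [IsProbabilityMeasure μ] (hμ : isVHaar μ)
    (hm : ∀ k, 2 ≤ m k) (f : VG m → ℂ) (n N : ℕ) (hNn : n ≤ N) (x : VG m) :
    vS μ (vSigma μ f n) N x = vSigma μ f n x := by
  rw [vS_vSigma hμ hm f n N x, min_eq_right hNn, vSigma_eq f n x, Finset.mul_sum]
  apply Finset.sum_congr rfl
  intro i _
  ring

lemma key_le {μ : Measure (VG m)} [IsProbabilityMeasure μ] (hμ : isVHaar μ)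
    (hm : ∀ k, 2 ≤ m k) (f : VG m → ℂ) (n N : ℕ) (hn : 1 ≤ n) (hN : 1 ≤ N) (hNn : N ≤ n)
    (x : VG m) :
    vS μ (vSigma μ f n) N x = ((N : ℂ) / n) * vSigma μ f N x
      + (((n - N : ℕ) : ℂ) / n) * vS μ f N x := by
  have hnz : (n : ℂ) ≠ 0 := Nat.cast_ne_zero.mpr (by omega)
  have hNz : (N : ℂ) ≠ 0 := Nat.cast_ne_zero.mpr (by omega)
  rw [vS_vSigma hμ hm f n N x, min_eq_left hNn, vSigma_eq f N x]
  unfold vS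
  rw [Finset.mul_sum, Finset.mul_sum, Finset.mul_sum, ← Finset.sum_add_distrib]
  apply Finset.sum_congr rfl
  intro i hi
  simp only [Finset.mem_range] at hi
  have h1 : ((n - i : ℕ) : ℂ) = (n : ℂ) - i := by
    rw [Nat.cast_sub (by omega)]
  have h2 : ((N - i : ℕ) : ℂ) = (N : ℂ) - i := by
    rw [Nat.cast_sub (by omega)]
  have h3 : ((n - N : ℕ) : ℂ) = (n : ℂ) - N := by
    rw [Nat.cast_sub (by omega)]
  rw [h1, h2, h3]
  field_simp
  ring


/-- The maximal operator `σ^# f = sup_k |σ_{M_k} f|`. -/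
def sigSharp (μ : Measure (VG m)) (f : VG m → ℂ) (x : VG m) : ℝ≥0∞ :=
  ⨆ k, ENNReal.ofReal (‖vSigma μ f (vM m k) x‖)

/-- The maximal operator `σ^* f = sup_{n ≥ 1} |σ_n f|`. -/
def sigStar (μ : Measure (VG m)) (f : VG m → ℂ) (x : VG m) : ℝ≥0∞ :=
  ⨆ n : ℕ, ENNReal.ofReal (‖vSigma μ f (n + 1) x‖)

/-- boundedness of `σ^#` (all `p > 0`) and `σ^*` (`p > 1/2`) from `H_p` to
`L_p` implies `‖σ_n f‖_{H_p} ≤ c_p ‖f‖_{H_p}` for `1/2 < p ≤ 1`. -/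
theorem sigma_Hp_bounded_of_maximal (m : ℕ → ℕ) (hm : ∀ k, 2 ≤ m k) (hb : ∃ B, ∀ k, m k ≤ B)
    (μ : Measure (VG m)) [IsProbabilityMeasure μ] (hμ : isVHaar μ)
    (hsharp : ∀ p : ℝ, 0 < p → ∃ C : ℝ≥0, ∀ f : VG m → ℂ, Integrable f μ →
      vLpE μ p (sigSharp μ f) ≤ C * vHp μ p f)
    (hstar : ∀ p : ℝ, 1 / 2 < p → ∃ C : ℝ≥0, ∀ f : VG m → ℂ, Integrable f μ →
      vLpE μ p (sigStar μ f) ≤ C * vHp μ p f) :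
    ∀ p : ℝ, 1 / 2 < p → p ≤ 1 → ∃ C : ℝ≥0, ∀ f : VG m → ℂ, Integrable f μ →
      ∀ n : ℕ, 1 ≤ n → vHp μ p (vSigma μ f n) ≤ C * vHp μ p f := by
  intro p hp12 hp1
  have hp0 : (0 : ℝ) < p := lt_trans (by norm_num) hp12
  obtain ⟨C1, hC1⟩ := hsharp p hp0
  obtain ⟨C2, hC2⟩ := hstar p hp12
  set K : ℝ≥0∞ := ((C1 : ℝ≥0∞) ^ p + 1 + (C2 : ℝ≥0∞) ^ p) ^ (1 / p) with hK
  have hbase_ne : ((C1 : ℝ≥0∞) ^ p + 1 + (C2 : ℝ≥0∞) ^ p) ≠ ∞ := by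
    apply ENNReal.add_ne_top.mpr
    constructor
    · apply ENNReal.add_ne_top.mpr
      exact ⟨(ENNReal.rpow_lt_top_of_nonneg hp0.le ENNReal.coe_ne_top).ne, ENNReal.one_ne_top⟩
    · exact (ENNReal.rpow_lt_top_of_nonneg hp0.le ENNReal.coe_ne_top).ne
  have hKtop : K ≠ ∞ :=
    (ENNReal.rpow_lt_top_of_nonneg (by positivity) hbase_ne).ne
  refine ⟨K.toNNReal, ?_⟩
  intro f hf n hn
  rw [ENNReal.coe_toNNReal hKtop]
  set G1 : VG m → ℝ≥0∞ := sigSharp μ f with hG1def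
  set G2 : VG m → ℝ≥0∞ :=
    fun x => ⨆ k, ENNReal.ofReal (‖vS μ f (vM m k) x‖) with hG2def
  set G3 : VG m → ℝ≥0∞ := sigStar μ f with hG3def
  have hG1m : Measurable G1 := by
    apply Measurable.iSup
    intro k
    exact ENNReal.measurable_ofReal.comp
      (continuous_norm.measurable.comp (vSigma_measurable μ f (vM m k)))
  have hG2m : Measurable G2 := by
    apply Measurable.iSup
    intro k
    exact ENNReal.measurable_ofReal.comp
      (continuous_norm.measurable.comp (vS_measurable μ f (vM m k)))
  have hG3m : Measurable G3 := by
    apply Measurable.iSup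
    intro k
    exact ENNReal.measurable_ofReal.comp
      (continuous_norm.measurable.comp (vSigma_measurable μ f (k + 1)))
  have hpt : ∀ x, (⨆ k, ENNReal.ofReal (‖vS μ (vSigma μ f n) (vM m k) x‖))
      ≤ G1 x + G2 x + G3 x := by
    intro x
    apply iSup_le
    intro k
    rcases le_or_gt n (vM m k) with h | h
    · rw [key_ge hμ hm f n (vM m k) h x]
      have hb : ENNReal.ofReal (‖vSigma μ f n x‖) ≤ G3 x := by
        have hn' : n - 1 + 1 = n := by omega
        have := le_iSup (fun j : ℕ =>
          ENNReal.ofReal (‖vSigma μ f (j + 1) x‖)) (n - 1)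
        rw [hn'] at this
        exact this
      exact hb.trans (le_add_left le_rfl)
    · have h1 : 1 ≤ vM m k := vM_pos hm k
      rw [key_le hμ hm f n (vM m k) hn h1 h.le x]
      set N := vM m k with hNdef
      have hq1 : ‖((N : ℂ) / n)‖ ≤ 1 := by
        rw [norm_div]
        simp only [Complex.norm_natCast]
        rw [div_le_one (by exact_mod_cast (by omega : (0:ℕ) < n))]
        exact_mod_cast h.le
      have hq2 : ‖(((n - N : ℕ) : ℂ) / n)‖ ≤ 1 := by
        rw [norm_div]
        simp only [Complex.norm_natCast]
        rw [div_le_one (by exact_mod_cast (by omega : (0:ℕ) < n))]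
        exact_mod_cast (by omega : n - N ≤ n)
      have habs : ‖((N : ℂ) / n) * vSigma μ f N x
            + (((n - N : ℕ) : ℂ) / n) * vS μ f N x‖
          ≤ ‖vSigma μ f N x‖ + ‖vS μ f N x‖ := by
        refine (norm_add_le _ _).trans ?_
        rw [norm_mul, norm_mul]
        apply add_le_add
        · exact mul_le_of_le_one_left (norm_nonneg _) hq1
        · exact mul_le_of_le_one_left (norm_nonneg _) hq2
      calc ENNReal.ofReal (‖((N : ℂ) / n) * vSigma μ f N x
            + (((n - N : ℕ) : ℂ) / n) * vS μ f N x‖)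
          ≤ ENNReal.ofReal (‖vSigma μ f N x‖ + ‖vS μ f N x‖) :=
            ENNReal.ofReal_le_ofReal habs
        _ ≤ ENNReal.ofReal (‖vSigma μ f N x‖)
            + ENNReal.ofReal (‖vS μ f N x‖) := ENNReal.ofReal_add_le
        _ ≤ G1 x + G2 x := by
            apply add_le_add
            · exact le_iSup (fun j : ℕ =>
                ENNReal.ofReal (‖vSigma μ f (vM m j) x‖)) k
            · exact le_iSup (fun j : ℕ =>
                ENNReal.ofReal (‖vS μ f (vM m j) x‖)) k
        _ ≤ G1 x + G2 x + G3 x := le_add_right le_rfl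
  set H : ℝ≥0∞ := vHp μ p f with hH
  have hG2L : vLpE μ p G2 = H := rfl
  have hstep1 : vHp μ p (vSigma μ f n) ^ p
      ≤ ∫⁻ x, (G1 x) ^ p ∂μ + ∫⁻ x, (G2 x) ^ p ∂μ + ∫⁻ x, (G3 x) ^ p ∂μ := by
    have hX : vHp μ p (vSigma μ f n) ^ p
        = ∫⁻ x, (⨆ k, ENNReal.ofReal (‖vS μ (vSigma μ f n) (vM m k) x‖)) ^ p ∂μ := by
      rw [vHp, ← ENNReal.rpow_mul, one_div, inv_mul_cancel₀ hp0.ne', ENNReal.rpow_one]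
    rw [hX]
    calc ∫⁻ x, (⨆ k, ENNReal.ofReal (‖vS μ (vSigma μ f n) (vM m k) x‖)) ^ p ∂μ
        ≤ ∫⁻ x, ((G1 x) ^ p + (G2 x) ^ p + (G3 x) ^ p) ∂μ := by
          apply lintegral_mono
          intro x
          calc (⨆ k, ENNReal.ofReal (‖vS μ (vSigma μ f n) (vM m k) x‖)) ^ p
              ≤ (G1 x + G2 x + G3 x) ^ p := ENNReal.rpow_le_rpow (hpt x) hp0.le
            _ ≤ (G1 x + G2 x) ^ p + (G3 x) ^ p :=
                ENNReal.rpow_add_le_add_rpow _ _ hp0.le hp1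
            _ ≤ (G1 x) ^ p + (G2 x) ^ p + (G3 x) ^ p :=
                add_le_add_left (ENNReal.rpow_add_le_add_rpow _ _ hp0.le hp1) _
      _ = ∫⁻ x, (G1 x) ^ p ∂μ + ∫⁻ x, (G2 x) ^ p ∂μ + ∫⁻ x, (G3 x) ^ p ∂μ := by
          have hm1 : Measurable fun x => (G1 x) ^ p :=
            ENNReal.continuous_rpow_const.measurable.comp hG1m
          have hm2 : Measurable fun x => (G2 x) ^ p :=
            ENNReal.continuous_rpow_const.measurable.comp hG2m
          rw [lintegral_add_left (f := fun x => (G1 x) ^ p + (G2 x) ^ p) (hm1.add hm2), lintegral_add_left hm1]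
  have hLp : ∀ G : VG m → ℝ≥0∞, (∫⁻ x, (G x) ^ p ∂μ) = vLpE μ p G ^ p := by
    intro G
    rw [vLpE, ← ENNReal.rpow_mul, one_div, inv_mul_cancel₀ hp0.ne', ENNReal.rpow_one]
  have hb1 : vLpE μ p G1 ^ p ≤ (C1 : ℝ≥0∞) ^ p * H ^ p := by
    rw [← ENNReal.mul_rpow_of_nonneg _ _ hp0.le]
    exact ENNReal.rpow_le_rpow (hC1 f hf) hp0.le
  have hb3 : vLpE μ p G3 ^ p ≤ (C2 : ℝ≥0∞) ^ p * H ^ p := by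
    rw [← ENNReal.mul_rpow_of_nonneg _ _ hp0.le]
    exact ENNReal.rpow_le_rpow (hC2 f hf) hp0.le
  have hstep2 : vHp μ p (vSigma μ f n) ^ p
      ≤ ((C1 : ℝ≥0∞) ^ p + 1 + (C2 : ℝ≥0∞) ^ p) * H ^ p := by
    refine hstep1.trans ?_
    rw [hLp G1, hLp G2, hLp G3, hG2L]
    calc vLpE μ p G1 ^ p + H ^ p + vLpE μ p G3 ^ p
        ≤ (C1 : ℝ≥0∞) ^ p * H ^ p + 1 * H ^ p + (C2 : ℝ≥0∞) ^ p * H ^ p := by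
          apply add_le_add (add_le_add hb1 (by rw [one_mul])) hb3
      _ = ((C1 : ℝ≥0∞) ^ p + 1 + (C2 : ℝ≥0∞) ^ p) * H ^ p := by ring
  calc vHp μ p (vSigma μ f n)
      = (vHp μ p (vSigma μ f n) ^ p) ^ (1 / p) := by
        rw [← ENNReal.rpow_mul, mul_one_div, div_self hp0.ne', ENNReal.rpow_one]
    _ ≤ (((C1 : ℝ≥0∞) ^ p + 1 + (C2 : ℝ≥0∞) ^ p) * H ^ p) ^ (1 / p) :=
        ENNReal.rpow_le_rpow hstep2 (by positivity)
    _ = K * H := by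
        rw [ENNReal.mul_rpow_of_nonneg _ _ (by positivity : (0:ℝ) ≤ 1 / p),
          ← ENNReal.rpow_mul, mul_one_div, div_self hp0.ne', ENNReal.rpow_one, hK]

end
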